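/- Let H₀, H₁ ∈ B(𝓗) be self-adjoint, let c ∈ ℝ, set H := H₀ + c·H₁, and assume that the spectra of H₀ and of H are both contained in [1,∞). With K₀ := ‖H₁·(√H₀)⁻¹‖, one has ‖H₁·(√H)⁻¹‖ ≤ K₀·(1 + 3·|c|·K₀); that is, H₁ is (√H)-bounded with a bound controlled by its (√H₀)-bound, uniformly in the perturbation coefficient c on bounded sets. -/

import Mathlib

open MeasureTheory
set_option synthInstance.maxHeartbeats 1000000
set_option maxHeartbeats 1000000

variable {𝓗 : Type*} [NormedAddCommGroup 𝓗] [InnerProductSpace ℂ 𝓗] [CompleteSpace 𝓗]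

/-- Let `H := H₀ + c·H₁` with `H₀, H₁` self-adjoint and spectra of `H₀` and `H`
in `[1,∞)`.  With `K₀ := ‖H₁·(√H₀)⁻¹‖`, one has `‖H₁·(√H)⁻¹‖ ≤ K₀·(1 + 3·|c|·K₀)`. -/
theorem stmt_8 (H₀ H₁ : 𝓗 →L[ℂ] 𝓗) (hH₀ : IsSelfAdjoint H₀) (hH₁ : IsSelfAdjoint H₁)
    (c : ℝ) (H : 𝓗 →L[ℂ] 𝓗) (hH : H = H₀ + c • H₁)
    (hspec₀ : spectrum ℝ H₀ ⊆ Set.Ici 1) (hspec : spectrum ℝ H ⊆ Set.Ici 1)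
    (K₀ : ℝ) (hK₀ : K₀ = ‖H₁ * Ring.inverse (CFC.sqrt H₀)‖) :
    ‖H₁ * Ring.inverse (CFC.sqrt H)‖ ≤ K₀ * (1 + 3 * |c| * K₀) := by
  have hcH₁ : IsSelfAdjoint (c • H₁) := by
    rw [IsSelfAdjoint, star_smul, star_trivial, hH₁.star_eq]
  have hHsa : IsSelfAdjoint H := by rw [hH]; exact hH₀.add hcH₁
  have hH0nn : (0 : 𝓗 →L[ℂ] 𝓗) ≤ H₀ :=
    (StarOrderedRing.nonneg_iff_spectrum_nonneg (R := ℝ) _ hH₀).mpr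
      fun x hx => le_trans zero_le_one (hspec₀ hx)
  have hHnn : (0 : 𝓗 →L[ℂ] 𝓗) ≤ H :=
    (StarOrderedRing.nonneg_iff_spectrum_nonneg (R := ℝ) _ hHsa).mpr
      fun x hx => le_trans zero_le_one (hspec hx)
  set S₀ := CFC.sqrt H₀ with hS₀def
  set S := CFC.sqrt H with hSdef
  have hS0nn : (0 : 𝓗 →L[ℂ] 𝓗) ≤ S₀ := CFC.sqrt_nonneg _
  have hSnn : (0 : 𝓗 →L[ℂ] 𝓗) ≤ S := CFC.sqrt_nonneg _
  have hS0sq : S₀ * S₀ = H₀ := CFC.sqrt_mul_sqrt_self H₀ hH0nn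
  have hSsq : S * S = H := CFC.sqrt_mul_sqrt_self H hHnn
  -- 1 ≤ sqrt, for both
  have one_le_sqrt : ∀ (B : 𝓗 →L[ℂ] 𝓗), (0 : 𝓗 →L[ℂ] 𝓗) ≤ B →
      spectrum ℝ B ⊆ Set.Ici 1 → (1 : 𝓗 →L[ℂ] 𝓗) ≤ CFC.sqrt B := by
    intro B hBnn hBspec
    rw [CFC.sqrt_eq_cfc]
    calc (1 : 𝓗 →L[ℂ] 𝓗) = cfc (1 : NNReal → NNReal) B := (cfc_one NNReal B).symm
      _ ≤ cfc NNReal.sqrt B := by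
          refine cfc_mono fun x hx => ?_
          have hx' : (x : ℝ) ∈ spectrum ℝ B := by
            simpa using spectrum.algebraMap_mem_iff (R := NNReal) ℝ |>.mpr hx
          have h1x : (1 : NNReal) ≤ x := by
            have := hspec₀
            exact_mod_cast hBspec hx'
          calc (1 : NNReal → NNReal) x = NNReal.sqrt 1 := by simp
            _ ≤ NNReal.sqrt x := NNReal.sqrt_le_sqrt.mpr h1x
  have hS0one : (1 : 𝓗 →L[ℂ] 𝓗) ≤ S₀ := one_le_sqrt H₀ hH0nn hspec₀
  have hSone : (1 : 𝓗 →L[ℂ] 𝓗) ≤ S := one_le_sqrt H hHnn hspec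
  have hS0u : IsUnit S₀ := CStarAlgebra.isUnit_of_le 1 hS0one
  have hSu : IsUnit S := CStarAlgebra.isUnit_of_le 1 hSone
  set T₀ := Ring.inverse S₀ with hT₀def
  set T := Ring.inverse S with hTdef
  have hT₀S₀ : T₀ * S₀ = 1 := Ring.inverse_mul_cancel S₀ hS0u
  have hTS : T * S = 1 := Ring.inverse_mul_cancel S hSu
  have hST : S * T = 1 := Ring.mul_inverse_cancel S hSu
  -- T nonneg and ≤ 1
  have hTeq : T = ↑(hSu.unit⁻¹) := by
    rw [hTdef]
    conv_lhs => rw [← hSu.unit_spec]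
    rw [Ring.inverse_unit]
  have hTnn : (0 : 𝓗 →L[ℂ] 𝓗) ≤ T := by
    rw [hTeq]
    exact CFC.inv_nonneg_of_nonneg hSu.unit (by rwa [hSu.unit_spec])
  have hTle1 : T ≤ 1 := by
    rw [hTeq]
    exact CStarAlgebra.inv_le_one (by rw [← Units.val_le_val] at *; simpa [hSu.unit_spec] using hSone)
  have hTnorm : ‖T‖ ≤ 1 := (CStarAlgebra.norm_le_one_iff_of_nonneg T hTnn).mpr hTle1
  -- selfadjointness
  have hTsa : IsSelfAdjoint T := .of_nonneg hTnn
  have hS0sa : IsSelfAdjoint S₀ := .of_nonneg hS0nn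
  -- expand T * H₀ * T
  have hH₀eq : H₀ = H - c • H₁ := by rw [hH]; abel
  have expand : T * H₀ * T = 1 - c • (T * H₁ * T) := by
    rw [hH₀eq, mul_sub, sub_mul]
    congr 1
    · rw [← hSsq, show T * (S * S) * T = (T * S) * (S * T) by noncomm_ring, hTS, hST, one_mul]
    · rw [mul_smul_comm, smul_mul_assoc]
  -- norms
  have h1 : ‖S₀ * T‖ ^ 2 = ‖T * H₀ * T‖ := by
    rw [sq, ← CStarRing.norm_star_mul_self]
    congr 1
    rw [star_mul, hTsa.star_eq, hS0sa.star_eq]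
    rw [← hS0sq]; noncomm_ring
  have h2 : ‖T * H₀ * T‖ ≤ 1 + |c| * ‖H₁ * T‖ := by
    rw [expand]
    calc ‖(1 : 𝓗 →L[ℂ] 𝓗) - c • (T * H₁ * T)‖
        ≤ ‖(1 : 𝓗 →L[ℂ] 𝓗)‖ + ‖c • (T * H₁ * T)‖ := norm_sub_le _ _
      _ ≤ 1 + |c| * ‖H₁ * T‖ := by
          gcongr
          · exact ContinuousLinearMap.norm_id_le
          · rw [norm_smul, Real.norm_eq_abs]
            gcongr
            calc ‖T * (H₁ * T)‖ ≤ ‖T‖ * ‖H₁ * T‖ := norm_mul_le _ _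
              _ ≤ 1 * ‖H₁ * T‖ := by gcongr
              _ = ‖H₁ * T‖ := one_mul _
  have h3 : ‖H₁ * T‖ ≤ K₀ * ‖S₀ * T‖ := by
    have : H₁ * T = (H₁ * T₀) * (S₀ * T) := by
      rw [show (H₁ * T₀) * (S₀ * T) = H₁ * (T₀ * S₀) * T by noncomm_ring, hT₀S₀, mul_one]
    rw [this, hK₀]
    exact norm_mul_le _ _
  have hK₀nn : 0 ≤ K₀ := hK₀ ▸ norm_nonneg _
  set x := ‖H₁ * T‖ with hx
  set y := ‖S₀ * T‖ with hy
  have hxnn : 0 ≤ x := norm_nonneg _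
  have hynn : 0 ≤ y := norm_nonneg _
  have hcnn : 0 ≤ |c| := abs_nonneg c
  have hy2 : y ^ 2 ≤ 1 + |c| * x := h1 ▸ h2
  have hA : x ^ 2 ≤ K₀ ^ 2 * (1 + |c| * x) := by
    nlinarith [mul_le_mul h3 h3 hxnn (by positivity : (0:ℝ) ≤ K₀ * y),
      mul_le_mul_of_nonneg_left hy2 (sq_nonneg K₀)]
  by_contra hcon
  push_neg at hcon
  have h0 : 0 ≤ K₀ * (1 + 3 * |c| * K₀) := by positivity
  have hprod : 0 < (x - K₀ * (1 + 3 * |c| * K₀)) * (x + K₀) :=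
    mul_pos (by linarith) (by linarith)
  nlinarith [mul_nonneg (mul_nonneg hcnn (mul_nonneg hK₀nn hK₀nn)) hxnn,
    mul_nonneg hcnn (mul_nonneg hK₀nn (mul_nonneg hK₀nn hK₀nn))]
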